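/- Let (G_k)_{k≥1} be independent random variables where G_k is geometric with success probability p_{c(k)} ∈ (0,1], and the labels c(k) take finitely many values 1,…,K with empirical frequencies (1/n)·#{k ≤ n : c(k) = j} → i(j) for each j. Then (1/n)·∑_{k≤n} G_k → ∑_j i(j)/p_j almost surely. -/

import Mathlib

open Filter MeasureTheory ProbabilityTheory
open scoped ENNReal NNReal

lemma geomAux_hasSum {q : ℝ} (hq0 : 0 < q) (hq1 : q ≤ 1) :
    HasSum (fun n : ℕ => ((n : ℝ) + 1) * (q * (1 - q) ^ n)) (1 / q) := by
  have hrn : ‖(1 - q : ℝ)‖ < 1 := by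
    rw [Real.norm_eq_abs, abs_lt]; constructor <;> linarith
  have h1 := hasSum_coe_mul_geometric_of_norm_lt_one (𝕜 := ℝ) hrn
  have h2 := hasSum_geometric_of_norm_lt_one hrn
  have h3 := (h1.add h2).mul_left q
  have hqne : q ≠ 0 := ne_of_gt hq0
  have hval : q * ((1 - q) / (1 - (1 - q)) ^ 2 + (1 - (1 - q))⁻¹) = 1 / q := by
    have h : (1 : ℝ) - (1 - q) = q := by ring
    rw [h]
    field_simp
    ring_nf
  have hfun : (fun n : ℕ => q * ((n : ℝ) * (1 - q) ^ n + (1 - q) ^ n))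
      = fun n : ℕ => ((n : ℝ) + 1) * (q * (1 - q) ^ n) := by
    funext n; ring
  rw [hfun, hval] at h3
  exact h3

lemma geomAux_hasSum' {q : ℝ} (hq0 : 0 < q) (hq1 : q ≤ 1) :
    HasSum (fun m : ℕ => (m : ℝ) * (q * (1 - q) ^ (m - 1))) (1 / q) := by
  have h := geomAux_hasSum hq0 hq1
  have h2 : HasSum (fun n : ℕ => ((n + 1 : ℕ) : ℝ) * (q * (1 - q) ^ ((n + 1) - 1))) (1 / q) := by
    refine h.congr_fun fun n => ?_
    have he : (n + 1) - 1 = n := by omega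
    rw [he]
    push_cast
    ring
  have h3 := (hasSum_nat_add_iff (f := fun m : ℕ => (m : ℝ) * (q * (1 - q) ^ (m - 1))) 1).mp h2
  simpa using h3

lemma geomAux_lintegral {Ω : Type*} [MeasurableSpace Ω] (ν : Measure Ω)
    {X : Ω → ℕ} (hX : Measurable X) {q : ℝ} (hq0 : 0 < q) (hq1 : q ≤ 1)
    (h : ∀ m : ℕ, 1 ≤ m → ν {ω | X ω = m} = ENNReal.ofReal (q * (1 - q) ^ (m - 1))) :
    ∫⁻ ω, (X ω : ℝ≥0∞) ∂ν = ENNReal.ofReal (1 / q) := by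
  have hmc : Measurable (fun m : ℕ => (m : ℝ≥0∞)) := measurable_from_top
  rw [← MeasureTheory.lintegral_map hmc hX, MeasureTheory.lintegral_countable']
  have hsing : ∀ m : ℕ, (Measure.map X ν) {m} = ν {ω | X ω = m} := by
    intro m
    rw [Measure.map_apply hX (measurableSet_singleton m)]
    rfl
  have hS := geomAux_hasSum' hq0 hq1
  have hterm : ∀ m : ℕ, (m : ℝ≥0∞) * (Measure.map X ν) {m}
      = ENNReal.ofReal ((m : ℝ) * (q * (1 - q) ^ (m - 1))) := by
    intro m
    rcases Nat.eq_zero_or_pos m with hm | hm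
    · subst hm; simp
    · rw [hsing, h m hm, ← ENNReal.ofReal_natCast, ← ENNReal.ofReal_mul (Nat.cast_nonneg m)]
  rw [tsum_congr hterm,
    ← ENNReal.ofReal_tsum_of_nonneg
      (fun m => mul_nonneg (Nat.cast_nonneg m)
        (mul_nonneg hq0.le (pow_nonneg (by linarith) _))) hS.summable, hS.tsum_eq]

lemma geomAux_integrable {Ω : Type*} [MeasurableSpace Ω] (ν : Measure Ω)
    {X : Ω → ℕ} (hX : Measurable X) {q : ℝ} (hq0 : 0 < q) (hq1 : q ≤ 1)
    (h : ∀ m : ℕ, 1 ≤ m → ν {ω | X ω = m} = ENNReal.ofReal (q * (1 - q) ^ (m - 1))) :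
    Integrable (fun ω => (X ω : ℝ)) ν := by
  have hcoe : Measurable (fun m : ℕ => (m : ℝ)) := measurable_from_top
  have hm : AEStronglyMeasurable (fun ω => (X ω : ℝ)) ν := (hcoe.comp hX).aestronglyMeasurable
  refine ⟨hm, ?_⟩
  rw [hasFiniteIntegral_iff_ofReal (Filter.Eventually.of_forall fun ω => by positivity)]
  have hc : ∀ ω, ENNReal.ofReal ((X ω : ℝ)) = (X ω : ℝ≥0∞) := fun ω => ENNReal.ofReal_natCast _
  simp_rw [hc, geomAux_lintegral ν hX hq0 hq1 h]
  exact ENNReal.ofReal_lt_top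

lemma geomAux_integral {Ω : Type*} [MeasurableSpace Ω] (ν : Measure Ω)
    {X : Ω → ℕ} (hX : Measurable X) {q : ℝ} (hq0 : 0 < q) (hq1 : q ≤ 1)
    (h : ∀ m : ℕ, 1 ≤ m → ν {ω | X ω = m} = ENNReal.ofReal (q * (1 - q) ^ (m - 1))) :
    ∫ ω, (X ω : ℝ) ∂ν = 1 / q := by
  have hcoe : Measurable (fun m : ℕ => (m : ℝ)) := measurable_from_top
  have hm : AEStronglyMeasurable (fun ω => (X ω : ℝ)) ν := (hcoe.comp hX).aestronglyMeasurable
  rw [MeasureTheory.integral_eq_lintegral_of_nonneg_ae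
      (Filter.Eventually.of_forall fun ω => by positivity) hm]
  have hc : ∀ ω, ENNReal.ofReal ((X ω : ℝ)) = (X ω : ℝ≥0∞) := fun ω => ENNReal.ofReal_natCast _
  simp_rw [hc, geomAux_lintegral ν hX hq0 hq1 h]
  rw [ENNReal.toReal_ofReal (by positivity)]

theorem stmt12 {Ω : Type*} [MeasurableSpace Ω] (μ : Measure Ω) [IsProbabilityMeasure μ]
    (K : ℕ) (p : Fin K → ℝ) (hp : ∀ j, p j ∈ Set.Ioc (0:ℝ) 1)
    (c : ℕ → Fin K) (i : Fin K → ℝ)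
    (hfreq : ∀ j, Tendsto
      (fun n : ℕ => (((Finset.range n).filter (fun k => c k = j)).card : ℝ) / n)
      atTop (nhds (i j)))
    (G : ℕ → Ω → ℕ) (hmeas : ∀ k, Measurable (G k))
    (hindep : iIndepFun G μ)
    (hgeom : ∀ k, ∀ m : ℕ, 1 ≤ m →
      μ {ω | G k ω = m} = ENNReal.ofReal (p (c k) * (1 - p (c k)) ^ (m - 1)))
    (hpos : ∀ k, ∀ᵐ ω ∂μ, 1 ≤ G k ω) :
    ∀ᵐ ω ∂μ,
      Tendsto (fun n : ℕ => (∑ k ∈ Finset.range n, (G k ω : ℝ)) / n) atTop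
        (nhds (∑ j, i j / p j)) := by
  classical
  -- identically distributed within a label class
  have hmap : ∀ k k', c k = c k' → Measure.map (G k) μ = Measure.map (G k') μ := by
    intro k k' hcc
    apply MeasureTheory.Measure.ext_of_singleton
    intro m
    rw [Measure.map_apply (hmeas k) (measurableSet_singleton m),
      Measure.map_apply (hmeas k') (measurableSet_singleton m)]
    rcases Nat.eq_zero_or_pos m with hm | hm
    · subst hm
      have hz : ∀ k₀ : ℕ, μ (G k₀ ⁻¹' {0}) = 0 := by
        intro k₀
        refine measure_mono_null ?_ (hpos k₀)
        intro ω hω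
        simp only [Set.mem_preimage, Set.mem_singleton_iff] at hω
        simp [hω]
      rw [hz, hz]
    · have h1 := hgeom k m hm
      have h2 := hgeom k' m hm
      have e1 : {ω | G k ω = m} = G k ⁻¹' {m} := rfl
      have e2 : {ω | G k' ω = m} = G k' ⁻¹' {m} := rfl
      rw [← e1, h1, ← e2, h2, hcc]
  -- the per-label claim
  have claim : ∀ j : Fin K, ∀ᵐ ω ∂μ,
      Tendsto (fun n : ℕ =>
        (∑ k ∈ (Finset.range n).filter (fun k => c k = j), (G k ω : ℝ)) / n)
        atTop (nhds (i j / p j)) := by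
    intro j
    by_cases hinf : {k : ℕ | c k = j}.Infinite
    · -- infinite label class: use the SLLN along the subsequence
      set P : ℕ → Prop := fun k => c k = j with hP
      set e : ℕ → ℕ := Nat.nth P with he
      have hePmem : ∀ l, P (e l) := fun l => Nat.nth_mem_of_infinite hinf l
      have heInj : Function.Injective e := (Nat.nth_strictMono hinf).injective
      set X : ℕ → Ω → ℝ := fun l ω => (G (e l) ω : ℝ) with hX
      have hXint : Integrable (X 0) μ :=
        geomAux_integrable μ (hmeas (e 0)) (hp (c (e 0))).1 (hp (c (e 0))).2
          (hgeom (e 0))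
      have hXindep : Pairwise (Function.onFun (IndepFun · · μ) X) := by
        intro l l' hll
        exact (hindep.indepFun (fun h => hll (heInj h))).comp
          measurable_from_top measurable_from_top
      have hXident : ∀ l, IdentDistrib (X l) (X 0) μ μ := by
        intro l
        have hid : IdentDistrib (G (e l)) (G (e 0)) μ μ :=
          ⟨(hmeas _).aemeasurable, (hmeas _).aemeasurable,
            hmap _ _ (by rw [hePmem l, hePmem 0])⟩
        exact hid.comp (u := fun m : ℕ => (m : ℝ)) measurable_from_top
      have hXmean : (∫ ω, X 0 ω ∂μ) = 1 / p j := by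
        have hi := geomAux_integral μ (hmeas (e 0)) (hp (c (e 0))).1 (hp (c (e 0))).2
          (hgeom (e 0))
        rwa [show c (e 0) = j from hePmem 0] at hi
      have hslln := ProbabilityTheory.strong_law_ae_real X hXint hXindep hXident
      rw [hXmean] at hslln
      -- counting function
      have hNcard : ∀ n : ℕ, (((Finset.range n).filter (fun k => c k = j)).card : ℝ)
          = (Nat.count P n : ℝ) := by
        intro n
        norm_cast
        rw [Nat.count_eq_card_filter_range]
      have hNfreq : Tendsto (fun n : ℕ => (Nat.count P n : ℝ) / n) atTop (nhds (i j)) := by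
        refine (hfreq j).congr fun n => ?_
        rw [hNcard]
      have hNtop : Tendsto (fun n => Nat.count P n) atTop atTop := by
        rw [tendsto_atTop]
        intro b
        rw [eventually_atTop]
        refine ⟨Nat.nth P b + 1, fun n hn => ?_⟩
        have hlt : Nat.nth P b < n := by omega
        have := (Nat.lt_nth_iff_count_lt hinf).mpr hlt
        omega
      have hsum : ∀ ω n, ∑ k ∈ (Finset.range n).filter (fun k => c k = j), (G k ω : ℝ)
          = ∑ l ∈ Finset.range (Nat.count P n), X l ω := by
        intro ω n
        refine Finset.sum_nbij' (fun k => Nat.count P k) (fun l => Nat.nth P l)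
          ?_ ?_ ?_ ?_ ?_
        · intro k hk
          simp only [Finset.mem_filter, Finset.mem_range] at hk
          simp only [Finset.mem_range]
          exact Nat.count_strict_mono hk.2 hk.1
        · intro l hl
          simp only [Finset.mem_range] at hl
          simp only [Finset.mem_filter, Finset.mem_range]
          exact ⟨(Nat.lt_nth_iff_count_lt hinf).mp hl, hePmem l⟩
        · intro k hk
          simp only [Finset.mem_filter] at hk
          exact Nat.nth_count (p := P) hk.2
        · intro l _
          exact Nat.count_nth_of_infinite hinf l
        · intro k hk
          simp only [Finset.mem_filter] at hk
          have hnc : Nat.nth P (Nat.count P k) = k := Nat.nth_count (p := P) hk.2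
          simp only [hX, he]
          rw [hnc]
      filter_upwards [hslln] with ω hω
      have key : ∀ n : ℕ,
          (∑ k ∈ (Finset.range n).filter (fun k => c k = j), (G k ω : ℝ)) / n
          = (Nat.count P n : ℝ) / n
            * ((∑ l ∈ Finset.range (Nat.count P n), X l ω) / (Nat.count P n)) := by
        intro n
        rw [hsum ω n]
        rcases Nat.eq_zero_or_pos (Nat.count P n) with h0 | h0
        · simp [h0]
        · rcases Nat.eq_zero_or_pos n with hn0 | hn0
          · simp [hn0]
          · have hNne : (Nat.count P n : ℝ) ≠ 0 := by positivity
            have hnne : (n : ℝ) ≠ 0 := by positivity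
            field_simp
      have hcomp : Tendsto
          (fun n => (∑ l ∈ Finset.range (Nat.count P n), X l ω) / (Nat.count P n : ℝ))
          atTop (nhds (1 / p j)) := hω.comp hNtop
      have hmul := hNfreq.mul hcomp
      have hval : i j * (1 / p j) = i j / p j := by ring
      rw [hval] at hmul
      exact hmul.congr fun n => (key n).symm
    · -- finite label class
      rw [Set.not_infinite] at hinf
      obtain ⟨N0, hN0⟩ : ∃ N0 : ℕ, ∀ k, c k = j → k < N0 := by
        obtain ⟨b, hb⟩ := hinf.bddAbove
        exact ⟨b + 1, fun k hk => Nat.lt_succ_of_le (hb hk)⟩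
      have hstab : ∀ n, N0 ≤ n →
          (Finset.range n).filter (fun k => c k = j)
          = (Finset.range N0).filter (fun k => c k = j) := by
        intro n hn
        ext k
        simp only [Finset.mem_filter, Finset.mem_range]
        constructor
        · rintro ⟨_, hk⟩; exact ⟨hN0 k hk, hk⟩
        · rintro ⟨hk1, hk2⟩; exact ⟨lt_of_lt_of_le hk1 hn, hk2⟩
      have hizero : i j = 0 := by
        have h1 : Tendsto
            (fun n : ℕ => (((Finset.range n).filter (fun k => c k = j)).card : ℝ) / n)
            atTop (nhds 0) := by
          have h2 : Tendsto (fun n : ℕ =>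
              (((Finset.range N0).filter (fun k => c k = j)).card : ℝ) / n)
              atTop (nhds 0) := tendsto_const_div_atTop_nhds_zero_nat _
          refine Tendsto.congr' ?_ h2
          filter_upwards [eventually_ge_atTop N0] with n hn
          rw [hstab n hn]
        exact tendsto_nhds_unique (hfreq j) h1
      refine Filter.Eventually.of_forall fun ω => ?_
      rw [hizero, zero_div]
      have h3 : Tendsto (fun n : ℕ =>
          (∑ k ∈ (Finset.range N0).filter (fun k => c k = j), (G k ω : ℝ)) / n)
          atTop (nhds 0) := tendsto_const_div_atTop_nhds_zero_nat _
      refine Tendsto.congr' ?_ h3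
      filter_upwards [eventually_ge_atTop N0] with n hn
      rw [hstab n hn]
  -- combine over labels
  rw [← MeasureTheory.ae_all_iff] at claim
  filter_upwards [claim] with ω hω
  have hdec : ∀ n : ℕ, (∑ k ∈ Finset.range n, (G k ω : ℝ)) / n
      = ∑ j : Fin K, (∑ k ∈ (Finset.range n).filter (fun k => c k = j), (G k ω : ℝ)) / n := by
    intro n
    rw [← Finset.sum_div]
    congr 1
    exact (Finset.sum_fiberwise (Finset.range n) c (fun k => (G k ω : ℝ))).symm
  have hfin := tendsto_finset_sum Finset.univ (fun j (_ : j ∈ Finset.univ) => hω j)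
  exact hfin.congr fun n => (hdec n).symm
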